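/- For any finite simple graph G with bandwidth bw(G), the cubicity of G satisfies cub(G) ≤ bw(G) + 1. -/

import Mathlib

/-- `G` has a representation by axis-parallel unit cubes in `k` dimensions:
distinct vertices are adjacent iff their cubes intersect, i.e. iff the
coordinates of the (lower corners of the) cubes differ by at most 1 in
every dimension. -/
def HasCubeRep {V : Type*} (G : SimpleGraph V) (k : ℕ) : Prop :=
  ∃ c : V → Fin k → ℝ, ∀ u v : V, u ≠ v → (G.Adj u v ↔ ∀ i : Fin k, |c u i - c v i| ≤ 1)

/-- The cubicity of `G`: the least number of dimensions of a unit-cube representation. -/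
noncomputable def cubicity {V : Type*} (G : SimpleGraph V) : ℕ :=
  sInf {k | HasCubeRep G k}

/-- The bandwidth of `G`: the least `b` such that some linear ordering of the
vertices has width at most `b`. -/
noncomputable def bandwidth {V : Type*} [Fintype V] (G : SimpleGraph V) : ℕ :=
  sInf {b | ∃ e : V ≃ Fin (Fintype.card V),
    ∀ u v : V, G.Adj u v → |((e u : ℕ) : ℤ) - ((e v : ℕ) : ℤ)| ≤ (b : ℤ)}

namespace CubBW

attribute [local instance] Classical.propDecidable

noncomputable section

def sg (d : Bool) : ℝ := if d then 1 else -1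

lemma abs_sg (d : Bool) : |sg d| = 1 := by cases d <;> simp [sg]

lemma sg_not (d : Bool) : sg (!d) = - sg d := by cases d <;> simp [sg]

lemma abs_sg_mul_le (d : Bool) {t c : ℝ} (h : |t| ≤ c) : |sg d * t| ≤ c := by
  rw [abs_mul, abs_sg, one_mul]; exact h

lemma abs_sg_mul_gt (d : Bool) {t c : ℝ} (h : c < |t|) : c < |sg d * t| := by
  rw [abs_mul, abs_sg, one_mul]; exact h

variable (A : ℕ → ℕ → Prop) (b r : ℕ)

def S : ℕ → ℝ × Bool
  | 0 => (0, true)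
  | k+1 =>
    let pr := S k
    if A (r + b*k) (r + b*(k+1)) then (pr.1 + sg pr.2 * (1/4), pr.2)
    else (pr.1 + sg pr.2 * (3/2), !pr.2)

lemma S_succ (k : ℕ) :
    (A (r + b*k) (r + b*(k+1)) ∧ (S A b r (k+1)).1 = (S A b r k).1 + sg (S A b r k).2 * (1/4)
        ∧ (S A b r (k+1)).2 = (S A b r k).2)
  ∨ (¬ A (r + b*k) (r + b*(k+1)) ∧ (S A b r (k+1)).1 = (S A b r k).1 + sg (S A b r k).2 * (3/2)
        ∧ (S A b r (k+1)).2 = !(S A b r k).2) := by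
  by_cases h : A (r + b*k) (r + b*(k+1))
  · left; refine ⟨h, ?_, ?_⟩ <;> simp [S, h]
  · right; refine ⟨h, ?_, ?_⟩ <;> simp [S, h]

def xval (p : ℕ) : ℝ :=
  if p < r then 1
  else (S A b r ((p - r)/b)).1 +
    (if (p - r) % b = 0 then 0
     else sg (S A b r ((p - r)/b)).2 * (if A (r + b*((p - r)/b)) p then 1 else 5/4))

lemma xval_pre {p : ℕ} (h : p < r) : xval A b r p = 1 := by simp [xval, h]

lemma xval_spec (hb : 0 < b) (k : ℕ) : xval A b r (r + b*k) = (S A b r k).1 := by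
  have h1 : ¬ (r + b*k < r) := by omega
  have h2 : (r + b*k - r) = b*k := by omega
  have h3 : b*k/b = k := Nat.mul_div_cancel_left k hb
  have h4 : b*k % b = 0 := Nat.mul_mod_right b k
  simp [xval, h1, h2, h3, h4]

lemma xval_ns (hb : 0 < b) (k ρ : ℕ) (h1 : 0 < ρ) (h2 : ρ < b) :
    xval A b r (r + b*k + ρ) = (S A b r k).1 +
      sg (S A b r k).2 * (if A (r + b*k) (r + b*k + ρ) then 1 else 5/4) := by
  have h0 : ¬ (r + b*k + ρ < r) := by omega
  have h3 : r + b*k + ρ - r = b*k + ρ := by omega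
  have h4 : (b*k + ρ)/b = k := by
    rw [Nat.mul_add_div hb, Nat.div_eq_of_lt h2, Nat.add_zero]
  have h5 : (b*k + ρ) % b = ρ := by
    rw [Nat.mul_add_mod]; exact Nat.mod_eq_of_lt h2
  simp [xval, h0, h3, h4, h5, h1.ne']

lemma xval_zero (hb : 0 < b) : xval A b r r = 0 := by
  have := xval_spec A b r hb 0
  rw [Nat.mul_zero, Nat.add_zero] at this
  rw [this]; simp [S]

lemma close_le (hb : 0 < b) {p q : ℕ} (hpq : p < q) (hgap : q ≤ p + b) (hA : A p q) :
    |xval A b r q - xval A b r p| ≤ 1 := by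
  rcases lt_or_ge q r with hqr | hqr
  · rw [xval_pre A b r hqr, xval_pre A b r (lt_trans hpq hqr)]
    simp
  · obtain ⟨k, ρ, rfl, hρb⟩ : ∃ k ρ, q = r + b*k + ρ ∧ ρ < b := by
      refine ⟨(q - r)/b, (q - r) % b, ?_, Nat.mod_lt _ hb⟩
      have := Nat.div_add_mod (q - r) b
      omega
    by_cases hρ0 : ρ = 0
    · subst hρ0
      rcases Nat.eq_zero_or_pos k with rfl | hkpos
      · -- q = r, hence p < r
        have hpr : p < r := by omega
        rw [xval_pre A b r hpr]
        have hq0 : r + b*0 + 0 = r := by omega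
        rw [hq0, xval_zero A b r hb]
        norm_num
      · obtain ⟨k', rfl⟩ : ∃ k', k = k' + 1 := ⟨k - 1, by omega⟩
        have hbk : b*(k'+1) = b*k' + b := by ring
        have hplb : r + b*k' ≤ p := by omega
        rw [Nat.add_zero] at hA ⊢
        rcases eq_or_lt_of_le hplb with hpu | hpu
        · -- p is the previous special
          subst hpu
          rw [xval_spec A b r hb (k'+1), xval_spec A b r hb k']
          rcases S_succ A b r k' with ⟨_, h1, _⟩ | ⟨hna, _, _⟩
          · rw [h1]
            have he : (S A b r k').1 + sg (S A b r k').2 * (1/4) - (S A b r k').1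
                = sg (S A b r k').2 * (1/4) := by ring
            rw [he]
            apply abs_sg_mul_le
            rw [abs_le]; constructor <;> norm_num
          · exact absurd hA hna
        · -- p is a non-special of era k'
          have hρ'1 : 0 < p - (r + b*k') := by omega
          have hρ'b : p - (r + b*k') < b := by omega
          have hpval : p = r + b*k' + (p - (r + b*k')) := by omega
          rw [hpval, xval_ns A b r hb k' _ hρ'1 hρ'b, xval_spec A b r hb (k'+1), ← hpval]
          have hre : ∀ c w : ℝ, (S A b r k').1 + sg (S A b r k').2 * c
              - ((S A b r k').1 + sg (S A b r k').2 * w) = sg (S A b r k').2 * (c - w) := by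
            intro c w; ring
          rcases S_succ A b r k' with ⟨_, h1, _⟩ | ⟨_, h1, _⟩
          · rw [h1, hre]
            apply abs_sg_mul_le
            split_ifs <;> (rw [abs_le]; constructor <;> norm_num)
          · rw [h1, hre]
            apply abs_sg_mul_le
            split_ifs <;> (rw [abs_le]; constructor <;> norm_num)
    · -- q non-special of era k
      have hρpos : 0 < ρ := by omega
      rw [xval_ns A b r hb k ρ hρpos hρb]
      rcases lt_or_ge p (r + b*k) with hplt | hpge
      · rcases lt_or_ge p r with hpr | hpr
        · -- p < r forces k = 0
          have hk0 : k = 0 := by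
            by_contra h
            have hk1 : 1 ≤ k := by omega
            have : b*1 ≤ b*k := Nat.mul_le_mul_left b hk1
            omega
          subst hk0
          rw [xval_pre A b r hpr]
          have hS0 : S A b r 0 = (0, true) := rfl
          rw [hS0]
          simp only [sg]
          split_ifs <;> (rw [abs_le]; constructor <;> norm_num)
        · -- p in era k-1
          have hk1 : 1 ≤ k := by
            rcases Nat.eq_zero_or_pos k with rfl | h
            · rw [Nat.mul_zero] at hplt; omega
            · exact h
          obtain ⟨k'', rfl⟩ : ∃ k'', k = k'' + 1 := ⟨k - 1, by omega⟩
          have hbk : b*(k''+1) = b*k'' + b := by ring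
          have h1' : 0 < p - (r + b*k'') := by omega
          have h2' : p - (r + b*k'') < b := by omega
          have hpval : p = r + b*k'' + (p - (r + b*k'')) := by omega
          rw [hpval, xval_ns A b r hb k'' _ h1' h2', ← hpval]
          rcases S_succ A b r k'' with ⟨_, h1, h2⟩ | ⟨_, h1, h2⟩
          · rw [h1, h2]
            have hre : ∀ c w : ℝ, (S A b r k'').1 + sg (S A b r k'').2 * (1/4)
                + sg (S A b r k'').2 * c
                - ((S A b r k'').1 + sg (S A b r k'').2 * w)
                = sg (S A b r k'').2 * (1/4 + c - w) := by
              intro c w; ring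
            rw [hre]
            apply abs_sg_mul_le
            split_ifs <;> (rw [abs_le]; constructor <;> norm_num)
          · rw [h1, h2, sg_not]
            have hre : ∀ c w : ℝ, (S A b r k'').1 + sg (S A b r k'').2 * (3/2)
                + (- sg (S A b r k'').2) * c
                - ((S A b r k'').1 + sg (S A b r k'').2 * w)
                = sg (S A b r k'').2 * (3/2 - c - w) := by
              intro c w; ring
            rw [hre]
            apply abs_sg_mul_le
            split_ifs <;> (rw [abs_le]; constructor <;> norm_num)
      · rcases eq_or_lt_of_le hpge with hpu | hpu
        · -- p is the special of era k
          subst hpu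
          rw [xval_spec A b r hb k, if_pos hA]
          have he : (S A b r k).1 + sg (S A b r k).2 * 1 - (S A b r k).1
              = sg (S A b r k).2 * 1 := by ring
          rw [he]
          apply abs_sg_mul_le
          rw [abs_le]; constructor <;> norm_num
        · -- p non-special of era k
          have h1' : 0 < p - (r + b*k) := by omega
          have h2' : p - (r + b*k) < b := by omega
          have hpval : p = r + b*k + (p - (r + b*k)) := by omega
          rw [hpval, xval_ns A b r hb k _ h1' h2', ← hpval]
          have hre : ∀ c w : ℝ, (S A b r k).1 + sg (S A b r k).2 * c
              - ((S A b r k).1 + sg (S A b r k).2 * w) = sg (S A b r k).2 * (c - w) := by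
            intro c w; ring
          rw [hre]
          apply abs_sg_mul_le
          split_ifs <;> (rw [abs_le]; constructor <;> norm_num)

lemma close_sep (hb : 0 < b) {k q : ℕ} (h1 : r + b*k < q) (h2 : q ≤ r + b*k + b)
    (hA : ¬ A (r + b*k) q) :
    1 < |xval A b r q - xval A b r (r + b*k)| := by
  rw [xval_spec A b r hb k]
  rcases eq_or_lt_of_le h2 with hq | hq
  · -- q = next special
    have hbk : b*(k+1) = b*k + b := by ring
    have hq' : q = r + b*(k+1) := by omega
    subst hq'
    rw [xval_spec A b r hb (k+1)]
    rcases S_succ A b r k with ⟨ha, _, _⟩ | ⟨_, hh, _⟩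
    · exact absurd ha hA
    · rw [hh]
      have he : (S A b r k).1 + sg (S A b r k).2 * (3/2) - (S A b r k).1
          = sg (S A b r k).2 * (3/2) := by ring
      rw [he]
      apply abs_sg_mul_gt
      rw [lt_abs]; left; norm_num
  · -- q non-special of era k
    have hρ1 : 0 < q - (r + b*k) := by omega
    have hρb : q - (r + b*k) < b := by omega
    have hqval : q = r + b*k + (q - (r + b*k)) := by omega
    rw [hqval, xval_ns A b r hb k _ hρ1 hρb, ← hqval, if_neg hA]
    have he : (S A b r k).1 + sg (S A b r k).2 * (5/4) - (S A b r k).1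
        = sg (S A b r k).2 * (5/4) := by ring
    rw [he]
    apply abs_sg_mul_gt
    rw [lt_abs]; left; norm_num

end
end CubBW

/-- for any finite simple graph `G`, `cub(G) ≤ bw(G) + 1`. -/
theorem cubicity_le_bandwidth_add_one {V : Type*} [Fintype V] (G : SimpleGraph V) :
    cubicity G ≤ bandwidth G + 1 := by
  classical
  set n := Fintype.card V with hn
  set BS : Set ℕ := {b | ∃ e : V ≃ Fin (Fintype.card V),
    ∀ u v : V, G.Adj u v → |((e u : ℕ) : ℤ) - ((e v : ℕ) : ℤ)| ≤ (b : ℤ)} with hBS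
  have hne : BS.Nonempty := by
    refine ⟨n, Fintype.equivFin V, ?_⟩
    intro u v _
    have h1 : ((Fintype.equivFin V) u : ℕ) < n := ((Fintype.equivFin V) u).isLt
    have h2 : ((Fintype.equivFin V) v : ℕ) < n := ((Fintype.equivFin V) v).isLt
    rw [abs_le]
    constructor <;> omega
  have hmem : bandwidth G ∈ BS := Nat.sInf_mem hne
  set b := bandwidth G with hb
  obtain ⟨e, he⟩ := hmem
  set A : ℕ → ℕ → Prop := fun p q =>
    ∃ (hp : p < n) (hq : q < n), G.Adj (e.symm ⟨p, hp⟩) (e.symm ⟨q, hq⟩) with hA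
  have f1 : ∀ u v : V, G.Adj u v → A ((e u : ℕ)) ((e v : ℕ)) := by
    intro u v h
    refine ⟨(e u).isLt, (e v).isLt, ?_⟩
    have h1 : (⟨(e u : ℕ), (e u).isLt⟩ : Fin n) = e u := rfl
    have h2 : (⟨(e v : ℕ), (e v).isLt⟩ : Fin n) = e v := rfl
    rw [h1, h2, Equiv.symm_apply_apply, Equiv.symm_apply_apply]
    exact h
  have f2 : ∀ u v : V, A ((e u : ℕ)) ((e v : ℕ)) → G.Adj u v := by
    intro u v h
    obtain ⟨hp, hq, h⟩ := h
    have h1 : (⟨(e u : ℕ), hp⟩ : Fin n) = e u := rfl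
    have h2 : (⟨(e v : ℕ), hq⟩ : Fin n) = e v := rfl
    rw [h1, h2, Equiv.symm_apply_apply, Equiv.symm_apply_apply] at h
    exact h
  have fgap : ∀ u v : V, G.Adj u v → (e v : ℕ) ≤ (e u : ℕ) + b := by
    intro u v h
    have := he u v h
    rw [abs_le] at this
    omega
  have σpos : (0:ℝ) < 2/(2*(b:ℝ)+1) := by positivity
  have h2b : (0:ℝ) < 2*(b:ℝ)+1 := by positivity
  set c : V → Fin (b+1) → ℝ := fun v i =>
    if (i : ℕ) = 0 then ((e v : ℕ) : ℝ) * (2/(2*(b:ℝ)+1))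
    else CubBW.xval A b ((i : ℕ) - 1) ((e v : ℕ)) with hc
  have hrep : HasCubeRep G (b+1) := by
    refine ⟨c, ?_⟩
    intro u v huv
    constructor
    · intro hadj i
      by_cases hi : (i : ℕ) = 0
      · simp only [hc, hi, if_pos]
        have hR : |((e u : ℕ):ℝ) - ((e v : ℕ):ℝ)| ≤ (b:ℝ) := by
          exact_mod_cast he u v hadj
        rw [← sub_mul, abs_mul, abs_of_nonneg (le_of_lt σpos)]
        have step : |((e u : ℕ):ℝ) - ((e v : ℕ):ℝ)| * (2/(2*(b:ℝ)+1))
            ≤ (b:ℝ) * (2/(2*(b:ℝ)+1)) := by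
          exact mul_le_mul_of_nonneg_right hR (le_of_lt σpos)
        refine le_trans step ?_
        have hrw : (b:ℝ) * (2/(2*(b:ℝ)+1)) = (2*(b:ℝ))/(2*(b:ℝ)+1) := by ring
        rw [hrw, div_le_one h2b]
        linarith
      · have hbpos : 0 < b := by
          have := i.isLt
          omega
        simp only [hc, if_neg hi]
        rcases lt_trichotomy ((e u : ℕ)) ((e v : ℕ)) with hlt | heq | hgt
        · rw [abs_sub_comm]
          exact CubBW.close_le A b ((i:ℕ)-1) hbpos hlt (fgap u v hadj) (f1 u v hadj)
        · exact absurd (e.injective (Fin.val_injective heq)) huv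
        · exact CubBW.close_le A b ((i:ℕ)-1) hbpos hgt (fgap v u (G.adj_symm hadj))
            (f1 v u (G.adj_symm hadj))
    · intro hall
      by_contra hnadj
      have hne' : (e u : ℕ) ≠ (e v : ℕ) := by
        intro h
        exact huv (e.injective (Fin.val_injective h))
      -- work with the ordered pair
      have key : ∀ w z : V, (e w : ℕ) < (e z : ℕ) → ¬ G.Adj w z →
          (∀ i : Fin (b+1), |c w i - c z i| ≤ 1) → False := by
        intro w z hlt hnadj hall
        rcases le_or_gt ((e z : ℕ)) ((e w : ℕ) + b) with hclose | hfar
        · -- close pair : use dimension (e w % b) + 1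
          have hbpos : 0 < b := by omega
          have hrlt : (e w : ℕ) % b < b := Nat.mod_lt _ hbpos
          have hib : (e w : ℕ) % b + 1 < b + 1 := by omega
          have hi := hall ⟨(e w : ℕ) % b + 1, hib⟩
          have hnA : ¬ A ((e w : ℕ)) ((e z : ℕ)) := fun h => hnadj (f2 w z h)
          have hsplit : (e w : ℕ) % b + b * ((e w : ℕ) / b) = (e w : ℕ) :=
            Nat.mod_add_div _ _
          have hsep := CubBW.close_sep A b ((e w : ℕ) % b) hbpos
            (k := (e w : ℕ) / b) (q := (e z : ℕ))
            (by omega) (by omega) (by rw [hsplit]; exact hnA)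
          rw [hsplit] at hsep
          simp only [hc] at hi
          have h0 : ¬((e w : ℕ) % b + 1 = 0) := by omega
          rw [if_neg h0, if_neg h0] at hi
          simp only [Nat.add_sub_cancel] at hi
          rw [abs_sub_comm] at hi
          linarith
        · -- far pair : use dimension 0
          have hi := hall ⟨0, by omega⟩
          simp only [hc, if_pos] at hi
          rw [← sub_mul, abs_mul, abs_of_nonneg (le_of_lt σpos)] at hi
          have hRe : ((b:ℝ)+1) ≤ |((e w : ℕ):ℝ) - ((e z : ℕ):ℝ)| := by
            rw [abs_sub_comm, abs_of_nonneg (by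
              have : ((e w : ℕ):ℝ) ≤ ((e z : ℕ):ℝ) := by exact_mod_cast le_of_lt hlt
              linarith)]
            have : ((e w : ℕ):ℝ) + ((b:ℝ)+1) ≤ ((e z : ℕ):ℝ) := by
              exact_mod_cast hfar
            linarith
          have hgt : 1 < |((e w : ℕ):ℝ) - ((e z : ℕ):ℝ)| * (2/(2*(b:ℝ)+1)) := by
            have step : ((b:ℝ)+1) * (2/(2*(b:ℝ)+1))
                ≤ |((e w : ℕ):ℝ) - ((e z : ℕ):ℝ)| * (2/(2*(b:ℝ)+1)) :=
              mul_le_mul_of_nonneg_right hRe (le_of_lt σpos)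
            refine lt_of_lt_of_le ?_ step
            have hrw : ((b:ℝ)+1) * (2/(2*(b:ℝ)+1)) = (2*(b:ℝ)+2)/(2*(b:ℝ)+1) := by
              ring
            rw [hrw, lt_div_iff₀ h2b]
            linarith
          linarith
      rcases lt_trichotomy ((e u : ℕ)) ((e v : ℕ)) with hlt | heq | hgt
      · exact key u v hlt hnadj hall
      · exact hne' heq
      · refine key v u hgt (fun h => hnadj (G.adj_symm h)) ?_
        intro i
        rw [abs_sub_comm]
        exact hall i
  calc cubicity G ≤ b + 1 := Nat.sInf_le hrep
    _ = bandwidth G + 1 := by rw [hb]
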